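/- Let S be a good local semigroup in ℕ^n with conductor C, G a good generating system for S, and a ∈ G with a < C in every coordinate (a not in the border of Small(S)). If there exists b ∈ ⟨G \ {a}⟩ with b ≥ a and b_i = a_i for some i, then G \ {a} is again a good generating system for S. -/

import Mathlib

/-- A good semigroup of `ℕ^n`: a submonoid satisfying (G1), (G2), (G3). -/
def IsGoodSemigroup {n : ℕ} (S : Set (Fin n → ℕ)) : Prop :=
  0 ∈ S ∧ (∀ a ∈ S, ∀ b ∈ S, a + b ∈ S) ∧
  (∀ a ∈ S, ∀ b ∈ S, a ⊓ b ∈ S) ∧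
  (∀ a ∈ S, ∀ b ∈ S, ∀ i, a i = b i →
    ∃ c ∈ S, a i < c i ∧ (∀ j, j ≠ i → min (a j) (b j) ≤ c j) ∧
      (∀ j, j ≠ i → a j ≠ b j → c j = min (a j) (b j))) ∧
  (∃ C, ∀ x, C ≤ x → x ∈ S)

/-- `C` is the conductor of `S ⊆ ℕ^n`. -/
def IsConductor {n : ℕ} (S : Set (Fin n → ℕ)) (C : Fin n → ℕ) : Prop :=
  (∀ x, C ≤ x → x ∈ S) ∧ ∀ C', (∀ x, C' ≤ x → x ∈ S) → C ≤ C'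

/-- `S` is local: its only element on the axes is `0`. -/
def IsLocal {n : ℕ} (S : Set (Fin n → ℕ)) : Prop :=
  ∀ a ∈ S, (∃ i, a i = 0) → a = 0

/-- `[G]`: the smallest submonoid of `ℕ^n` containing `G` closed under componentwise infima. -/
def goodClosure {n : ℕ} (G : Set (Fin n → ℕ)) : Set (Fin n → ℕ) :=
  ⋂₀ {M | G ⊆ M ∧ 0 ∈ M ∧ (∀ a ∈ M, ∀ b ∈ M, a + b ∈ M) ∧ ∀ a ∈ M, ∀ b ∈ M, a ⊓ b ∈ M}

/-- `[G]_C = C ⊓ [G]`. -/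
def goodClosureBd {n : ℕ} (G : Set (Fin n → ℕ)) (C : Fin n → ℕ) : Set (Fin n → ℕ) :=
  (fun x => C ⊓ x) '' goodClosure G

/-- `G` is a good generating system for `S` (with conductor `C`): `[G]_C = Small(S)`. -/
def IsGoodGenSys {n : ℕ} (S : Set (Fin n → ℕ)) (C : Fin n → ℕ) (G : Set (Fin n → ℕ)) : Prop :=
  goodClosureBd G C = {a ∈ S | a ≤ C}

section Helpers

variable {n : ℕ}

private lemma gc_subset (G : Set (Fin n → ℕ)) : G ⊆ goodClosure G :=
  fun _ hx => Set.mem_sInter.2 fun _ hM => hM.1 hx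

private lemma gc_zero (G : Set (Fin n → ℕ)) : 0 ∈ goodClosure G :=
  Set.mem_sInter.2 fun _ hM => hM.2.1

private lemma gc_add {G : Set (Fin n → ℕ)} {x y : Fin n → ℕ}
    (hx : x ∈ goodClosure G) (hy : y ∈ goodClosure G) : x + y ∈ goodClosure G :=
  Set.mem_sInter.2 fun M hM => hM.2.2.1 x (Set.mem_sInter.1 hx M hM) y (Set.mem_sInter.1 hy M hM)

private lemma gc_inf {G : Set (Fin n → ℕ)} {x y : Fin n → ℕ}
    (hx : x ∈ goodClosure G) (hy : y ∈ goodClosure G) : x ⊓ y ∈ goodClosure G :=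
  Set.mem_sInter.2 fun M hM => hM.2.2.2 x (Set.mem_sInter.1 hx M hM) y (Set.mem_sInter.1 hy M hM)

private lemma gc_mono {G' G : Set (Fin n → ℕ)} (h : G' ⊆ G) :
    goodClosure G' ⊆ goodClosure G := fun x hx =>
  Set.mem_sInter.2 fun M hM => Set.mem_sInter.1 hx M ⟨h.trans hM.1, hM.2⟩

private lemma closure_sub_gc (G : Set (Fin n → ℕ)) :
    (AddSubmonoid.closure G : Set (Fin n → ℕ)) ⊆ goodClosure G := by
  intro x hx
  induction hx using AddSubmonoid.closure_induction with
  | mem y hy => exact gc_subset G hy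
  | zero => exact gc_zero G
  | add _ _ _ _ h1 h2 => exact gc_add h1 h2

/-- Coordinate characterization of the good closure. -/
private lemma gc_coord {G : Set (Fin n → ℕ)} {x : Fin n → ℕ} (hx : x ∈ goodClosure G)
    (j : Fin n) : ∃ δ ∈ AddSubmonoid.closure G, x ≤ δ ∧ δ j = x j := by
  have hM : goodClosure G ⊆
      {x : Fin n → ℕ | ∀ j, ∃ δ ∈ AddSubmonoid.closure G, x ≤ δ ∧ δ j = x j} := by
    apply Set.sInter_subset_of_mem
    refine ⟨?_, ?_, ?_, ?_⟩
    · intro y hy j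
      exact ⟨y, AddSubmonoid.subset_closure hy, le_refl _, rfl⟩
    · intro j
      exact ⟨0, AddSubmonoid.zero_mem _, le_refl _, rfl⟩
    · intro y hy z hz j
      obtain ⟨δ1, h1, h1le, h1j⟩ := hy j
      obtain ⟨δ2, h2, h2le, h2j⟩ := hz j
      exact ⟨δ1 + δ2, AddSubmonoid.add_mem _ h1 h2, add_le_add h1le h2le,
        by simp [h1j, h2j]⟩
    · intro y hy z hz j
      rcases le_total (y j) (z j) with h | h
      · obtain ⟨δ, hδ, hle, hj⟩ := hy j
        exact ⟨δ, hδ, inf_le_left.trans hle, by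
          simp only [Pi.inf_apply, hj]; exact (min_eq_left h).symm⟩
      · obtain ⟨δ, hδ, hle, hj⟩ := hz j
        exact ⟨δ, hδ, inf_le_right.trans hle, by
          simp only [Pi.inf_apply, hj]; exact (min_eq_right h).symm⟩
  exact hM hx j

/-- Decomposition of elements of `⟨G⟩` when `a ∈ G`. -/
private lemma closure_decomp {G : Set (Fin n → ℕ)} {a : Fin n → ℕ} (haG : a ∈ G)
    {δ : Fin n → ℕ} (hδ : δ ∈ AddSubmonoid.closure G) :
    ∃ m : ℕ, ∃ g ∈ AddSubmonoid.closure (G \ {a}), δ = m • a + g := by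
  have hGeq : G = {a} ∪ (G \ {a}) := by
    rw [Set.singleton_union, Set.insert_diff_singleton, Set.insert_eq_self.2 haG]
  rw [hGeq, AddSubmonoid.closure_union, AddSubmonoid.mem_sup] at hδ
  obtain ⟨y, hy, z, hz, hyz⟩ := hδ
  rw [AddSubmonoid.mem_closure_singleton] at hy
  obtain ⟨m, hm⟩ := hy
  exact ⟨m, z, hz, by rw [← hyz, hm]⟩

end Helpers

theorem remove_shared_coord_generator {n : ℕ} (S : Set (Fin n → ℕ))
    (hS : IsGoodSemigroup S) (hloc : IsLocal S)
    (C : Fin n → ℕ) (hC : IsConductor S C)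
    (G : Set (Fin n → ℕ)) (hG : IsGoodGenSys S C G)
    (a : Fin n → ℕ) (haG : a ∈ G) (hab : ∀ i, a i < C i)
    (b : Fin n → ℕ) (hb : b ∈ AddSubmonoid.closure (G \ {a}))
    (hba : a ≤ b) (hshare : ∃ i, b i = a i) :
    IsGoodGenSys S C (G \ {a}) := by
  obtain ⟨i, hbi⟩ := hshare
  have haC : a ≤ C := fun j => (hab j).le
  -- truncations of elements of the good closure lie in Small(S)
  have trunc : ∀ {x : Fin n → ℕ}, x ∈ goodClosure G → C ⊓ x ∈ S ∧ C ⊓ x ≤ C := by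
    intro x hx
    have : C ⊓ x ∈ goodClosureBd G C := ⟨x, hx, rfl⟩
    rw [hG] at this
    exact ⟨this.1, this.2⟩
  have hCS : C ∈ S := hC.1 C (le_refl _)
  have haS : a ∈ S := by
    have h := (trunc (gc_subset G haG)).1
    rwa [inf_eq_right.2 haC] at h
  -- key: a ∈ goodClosure (G \ {a})
  have key : a ∈ goodClosure (G \ {a}) := by
    by_cases ha0 : a = 0
    · rw [ha0]; exact gc_zero _
    · have hapos : ∀ j, 0 < a j := by
        intro j
        by_contra h
        exact ha0 (hloc a haS ⟨j, Nat.eq_zero_of_not_pos h⟩)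
      -- locality: an element of the closure with a zero coordinate is zero
      have loc0 : ∀ {g : Fin n → ℕ}, g ∈ goodClosure G → (∃ j, g j = 0) → g = 0 := by
        intro g hg ⟨j, hgj⟩
        have h0 : C ⊓ g = 0 := by
          apply hloc _ (trunc hg).1
          exact ⟨j, by simp [hgj]⟩
        funext l
        have := congrFun h0 l
        simp only [Pi.inf_apply, Pi.zero_apply] at this ⊢
        rcases Nat.min_eq_zero_iff.1 this with h | h
        · have h1 := hab l; have h2 := hapos l; omega
        · exact h
      -- for each coordinate, find d ∈ ⟨G\{a}⟩ with d ≥ a and d j = a j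
      have hd : ∀ j, ∃ d ∈ AddSubmonoid.closure (G \ {a}), a ≤ d ∧ d j = a j := by
        intro j
        by_cases hbj : b j = a j
        · exact ⟨b, hb, hba, hbj⟩
        · have hbj' : a j < b j := lt_of_le_of_ne (hba j) (Ne.symm hbj)
          have hji : j ≠ i := by
            intro h; rw [h, hbi] at hbj'; exact lt_irrefl _ hbj'
          set b' : Fin n → ℕ := C ⊓ b with hb'def
          have hb'S : b' ∈ S := (trunc (closure_sub_gc G
            ((AddSubmonoid.closure_mono (Set.diff_subset)) hb))).1
          have hb'l : ∀ l, a l ≤ b' l := fun l =>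
            le_min (hab l).le (hba l)
          have hab'i : a i = b' i := by
            simp only [hb'def, Pi.inf_apply, hbi]
            exact (min_eq_right (hab i).le).symm
          obtain ⟨c, hcS, hci, hcmin, hceq⟩ := hS.2.2.2.1 a haS b' hb'S i hab'i
          have hac : a ≤ c := by
            intro l
            by_cases hl : l = i
            · rw [hl]; exact hci.le
            · exact (le_min (le_refl _) (hb'l l)).trans
                (by simpa [min_comm] using hcmin l hl)
          have hcj : c j = a j := by
            have hne : a j ≠ b' j := by
              have : a j < b' j := lt_min (hab j) hbj'
              exact this.ne
            rw [hceq j hji hne]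
            exact min_eq_left (hb'l j)
          -- c'' = C ⊓ c ∈ Small(S), pull back through hG
          have hc''S : C ⊓ c ∈ S := hS.2.2.1 C hCS c hcS
          have hc''mem : C ⊓ c ∈ goodClosureBd G C := by
            rw [hG]; exact ⟨hc''S, inf_le_left⟩
          obtain ⟨x, hxgc, hx⟩ := hc''mem
          have hxge : C ⊓ c ≤ x := by rw [← hx]; exact inf_le_right
          have hxj : x j = a j := by
            have h1 : min (C j) (x j) = a j := by
              have := congrFun hx j
              simp only [Pi.inf_apply] at this
              rw [this, hcj]
              exact inf_eq_right.2 (hab j).le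
            rcases le_total (C j) (x j) with h | h
            · rw [min_eq_left h] at h1; exact absurd h1 (hab j).ne'
            · rwa [min_eq_right h] at h1
          have hxi : a i < x i := by
            refine lt_of_lt_of_le ?_ (hxge i)
            exact lt_min (hab i) hci
          have hax : a ≤ x := (le_inf haC hac).trans hxge
          obtain ⟨δ, hδcl, hδge, hδj⟩ := gc_coord hxgc j
          obtain ⟨m, g, hgcl, hδeq⟩ := closure_decomp haG hδcl
          rcases Nat.eq_zero_or_pos m with hm | hm
          · refine ⟨δ, ?_, hax.trans hδge, by rw [hδj, hxj]⟩
            rw [hδeq, hm, zero_smul, zero_add]; exact hgcl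
          · exfalso
            have hδjval : m * a j + g j = a j := by
              have := congrFun hδeq j
              simp only [Pi.add_apply, Pi.smul_apply, smul_eq_mul] at this
              rw [← this, hδj, hxj]
            have hgj : g j = 0 := by
              have : a j ≤ m * a j := Nat.le_mul_of_pos_left _ hm
              omega
            have hmaj : m * a j = a j := by omega
            have hm1 : m = 1 := by
              have := hapos j
              rcases Nat.lt_or_ge m 2 with h | h
              · omega
              · nlinarith
            have hg0 : g = 0 :=
              loc0 (closure_sub_gc G ((AddSubmonoid.closure_mono (Set.diff_subset)) hgcl))
                ⟨j, hgj⟩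
            have hδa : δ = a := by rw [hδeq, hm1, hg0, one_smul, add_zero]
            have : a i < a i := lt_of_lt_of_le hxi (by rw [← hδa]; exact hδge i)
            exact lt_irrefl _ this
      -- assemble a as an infimum of the d's
      have fold : ∀ s : Finset (Fin n), ∃ e ∈ goodClosure (G \ {a}),
          a ≤ e ∧ ∀ j ∈ s, e j = a j := by
        intro s
        induction s using Finset.induction with
        | empty => exact ⟨b, closure_sub_gc _ hb, hba, fun j hj => absurd hj (by simp)⟩
        | @insert j s hj ih =>
          obtain ⟨e, hegc, hea, hes⟩ := ih
          obtain ⟨d, hdcl, hda, hdj⟩ := hd j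
          refine ⟨e ⊓ d, gc_inf hegc (closure_sub_gc _ hdcl), le_inf hea hda, ?_⟩
          intro l hl
          rcases Finset.mem_insert.1 hl with h | h
          · subst h
            simp only [Pi.inf_apply, hdj]
            exact inf_eq_right.2 (hea l)
          · simp only [Pi.inf_apply, hes l h]
            exact inf_eq_left.2 (hda l)
      obtain ⟨e, hegc, hea, hes⟩ := fold Finset.univ
      have : e = a := funext fun j => hes j (Finset.mem_univ j)
      exact this ▸ hegc
  -- goodClosure (G \ {a}) = goodClosure G
  have hgceq : goodClosure (G \ {a}) = goodClosure G := by
    apply Set.Subset.antisymm (gc_mono Set.diff_subset)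
    apply Set.sInter_subset_of_mem
    refine ⟨?_, gc_zero _, fun x hx y hy => gc_add hx hy, fun x hx y hy => gc_inf hx hy⟩
    intro x hx
    by_cases hxa : x = a
    · rw [hxa]; exact key
    · exact gc_subset _ ⟨hx, hxa⟩
  unfold IsGoodGenSys goodClosureBd
  rw [hgceq]
  exact hG
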